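/- Let π^ε be a peg basis permutation of B̂_k^{rd}, i.e., π^ε ∉ B̂_k^{rd} and every proper peg pattern of π^ε belongs to B̂_k^{rd}. Then π^ε is compact. -/

import Mathlib

/-! ## Basic definitions: permutations as lists, reversals, distances -/

/-- Decorations for peg permutations: `+`, `-`, `•`. -/
inductive Deco where
  | plus : Deco
  | minus : Deco
  | dot : Deco
deriving DecidableEq, Repr

/-- A peg permutation: a list of entries together with decorations. -/
abbrev PegPerm := List (ℕ × Deco)

def pegDefault : ℕ × Deco := (0, Deco.dot)

/-- The identity permutation `1 2 ⋯ n` as a list. -/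
def idPerm (n : ℕ) : List ℕ := List.range' 1 n

/-- A list of naturals is a permutation (of `1,…,n` where `n` is its length). -/
def IsPermList (π : List ℕ) : Prop := π.Perm (idPerm π.length)

/-- Reverse the segment of a list from (0-indexed) position `i` to `j` inclusive. -/
def segReverse {α : Type*} (l : List α) (i j : ℕ) : List α :=
  l.take i ++ ((l.drop i).take (j + 1 - i)).reverse ++ l.drop (j + 1)

/-- One reversal step on permutations (reverse a segment of length at least 2). -/
def RevStep (l l' : List ℕ) : Prop :=
  ∃ i j, i < j ∧ j < l.length ∧ l' = segReverse l i j

/-- One prefix reversal step on permutations (reverse a prefix of length at least 2). -/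
def PrefRevStep (l l' : List ℕ) : Prop :=
  ∃ j, 0 < j ∧ j < l.length ∧ l' = segReverse l 0 j

/-- Reachability in exactly `k` steps of the step relation `step`. -/
def ReachIn {α : Type*} (step : α → α → Prop) : ℕ → α → α → Prop
  | 0, x, y => x = y
  | k + 1, x, y => ∃ z, step x z ∧ ReachIn step k z y

/-- The reversal distance of a permutation from the identity. -/
noncomputable def rd (π : List ℕ) : ℕ :=
  sInf {k | ReachIn RevStep k π (idPerm π.length)}

/-- The prefix reversal distance of a permutation from the identity. -/
noncomputable def prd (π : List ℕ) : ℕ :=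
  sInf {k | ReachIn PrefRevStep k π (idPerm π.length)}

/-- The ball of radius `k` in the reversal model. -/
def Brd (k : ℕ) : Set (List ℕ) := {π | IsPermList π ∧ rd π ≤ k}

/-- The ball of radius `k` in the prefix reversal model. -/
def Bprd (k : ℕ) : Set (List ℕ) := {π | IsPermList π ∧ prd π ≤ k}

/-! ## Peg permutations: oriented reversals and distances -/

def flipDeco : Deco → Deco
  | Deco.plus => Deco.minus
  | Deco.minus => Deco.plus
  | Deco.dot => Deco.dot

/-- Oriented reversal of the segment from position `i` to `j` (0-indexed) of a peg
permutation: the segment is reversed and the decorations `+`, `-` are swapped. -/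
def pegSegReverse (l : PegPerm) (i j : ℕ) : PegPerm :=
  l.take i ++ (((l.drop i).take (j + 1 - i)).map (fun p => (p.1, flipDeco p.2))).reverse
    ++ l.drop (j + 1)

/-- One oriented reversal step on peg permutations. -/
def PegRevStep (l l' : PegPerm) : Prop :=
  ∃ i j, i ≤ j ∧ j < l.length ∧ l' = pegSegReverse l i j

/-- One oriented prefix reversal step on peg permutations. -/
def PegPrefRevStep (l l' : PegPerm) : Prop :=
  ∃ j, j < l.length ∧ l' = pegSegReverse l 0 j

/-- The underlying list of a peg permutation is a permutation. -/
def IsPegPermList (l : PegPerm) : Prop := IsPermList (l.map Prod.fst)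

/-- An identity peg permutation: underlying identity, every decoration `+` or `•`. -/
def IsIdPeg (l : PegPerm) : Prop :=
  l.map Prod.fst = idPerm l.length ∧ ∀ p ∈ l, p.2 ≠ Deco.minus

/-- The reversal distance of a peg permutation from an identity peg permutation. -/
noncomputable def pegRd (l : PegPerm) : ℕ :=
  sInf {k | ∃ m, IsIdPeg m ∧ ReachIn PegRevStep k l m}

/-- The prefix reversal distance of a peg permutation from an identity peg permutation. -/
noncomputable def pegPrd (l : PegPerm) : ℕ :=
  sInf {k | ∃ m, IsIdPeg m ∧ ReachIn PegPrefRevStep k l m}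

/-- The ball of radius `k` of peg permutations in the reversal model. -/
def PegBrd (k : ℕ) : Set PegPerm := {l | IsPegPermList l ∧ pegRd l ≤ k}

/-- The ball of radius `k` of peg permutations in the prefix reversal model. -/
def PegBprd (k : ℕ) : Set PegPerm := {l | IsPegPermList l ∧ pegPrd l ≤ k}

/-! ## Patterns -/

/-- Two lists of the same length are order-isomorphic. -/
def OrderIsoList (s t : List ℕ) : Prop :=
  s.length = t.length ∧
  ∀ i j, i < s.length → j < s.length → (s.getD i 0 < s.getD j 0 ↔ t.getD i 0 < t.getD j 0)

/-- `σ` is a (classical) pattern of `τ`. -/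
def IsPattern (σ τ : List ℕ) : Prop :=
  ∃ s, s.Sublist τ ∧ OrderIsoList s σ

/-- `σ` is a peg pattern of `τ`: some subsequence of `τ` is order-isomorphic to `σ`
and whenever an entry of the subsequence is decorated `+` (resp. `-`), the
corresponding entry of `σ` is decorated `+` (resp. `-`). -/
def IsPegPattern (σ τ : PegPerm) : Prop :=
  ∃ s : PegPerm, s.Sublist τ ∧ OrderIsoList (s.map Prod.fst) (σ.map Prod.fst) ∧
    ∀ i, i < s.length →
      ((s.getD i pegDefault).2 = Deco.plus → (σ.getD i pegDefault).2 = Deco.plus) ∧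
      ((s.getD i pegDefault).2 = Deco.minus → (σ.getD i pegDefault).2 = Deco.minus)

/-! ## Strips, clean compact and compact peg permutations -/

/-- Two adjacent entries of a peg permutation lie in a common strip. -/
def StripPair (p q : ℕ × Deco) : Prop :=
  (q.1 = p.1 + 1 ∧ p.2 ≠ Deco.minus ∧ q.2 ≠ Deco.minus) ∨
  (p.1 = q.1 + 1 ∧ p.2 ≠ Deco.plus ∧ q.2 ≠ Deco.plus)

/-- A peg permutation is clean compact when all its strips have length 1, i.e. no two
adjacent entries lie in a common strip. -/
def CleanCompact (l : PegPerm) : Prop :=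
  ∀ i, i + 1 < l.length → ¬ StripPair (l.getD i pegDefault) (l.getD (i + 1) pegDefault)

/-- A peg permutation is compact when every strip has length 1 or consists
exclusively of entries decorated `•`. -/
def CompactPeg (l : PegPerm) : Prop :=
  ∀ i, i + 1 < l.length → StripPair (l.getD i pegDefault) (l.getD (i + 1) pegDefault) →
    (l.getD i pegDefault).2 = Deco.dot ∧ (l.getD (i + 1) pegDefault).2 = Deco.dot

/-! ## The clean compact peg permutation `peg(γ)` associated with a permutation -/

/-- The decomposition of a permutation into maximal monotone strips of adjacent values. -/
def stripGroups (γ : List ℕ) : List (List ℕ) :=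
  γ.splitBy (fun a b => b == a + 1 || a == b + 1)

def stripMin (s : List ℕ) : ℕ := s.foldr min (s.headD 0)

def stripDeco (s : List ℕ) : Deco :=
  if s.length ≤ 1 then Deco.dot
  else if s.headD 0 < s.getLastD 0 then Deco.plus
  else Deco.minus

/-- Rank of `v` among `vals` (used for rescaling). -/
def rankIn (vals : List ℕ) (v : ℕ) : ℕ := (vals.filter (fun w => w ≤ v)).length

/-- The clean compact peg permutation associated with a permutation: replace each
strip by its minimum, decorated `+`/`-`/`•` according to the kind of strip, and rescale. -/
def pegOf (γ : List ℕ) : PegPerm :=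
  (stripGroups γ).map (fun s => (rankIn ((stripGroups γ).map stripMin) (stripMin s), stripDeco s))

/-! ## Monotone inflations and grid classes -/

/-- A legal inflation vector for a peg permutation. -/
def LegalVec (πε : PegPerm) (v : List ℕ) : Prop :=
  v.length = πε.length ∧
  ∀ i, i < πε.length → (πε.getD i pegDefault).2 = Deco.dot → v.getD i 0 ≤ 1

/-- The values of the `i`-th block of the monotone inflation of `πε` through `v`:
an increasing (resp. decreasing) run of `vᵢ` values, occupying the interval of values
determined by the relative order of the entries of `πε`. -/
def blockVals (πε : PegPerm) (v : List ℕ) (i : ℕ) : List ℕ :=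
  let off := (((List.range πε.length).filter
      (fun j => (πε.getD j pegDefault).1 < (πε.getD i pegDefault).1)).map
      (fun j => v.getD j 0)).sum
  if (πε.getD i pegDefault).2 = Deco.minus then (List.range' (off + 1) (v.getD i 0)).reverse
  else List.range' (off + 1) (v.getD i 0)

/-- The monotone inflation `πε[v]`. -/
def inflate (πε : PegPerm) (v : List ℕ) : List ℕ :=
  ((List.range πε.length).map (blockVals πε v)).flatten

/-- The grid class of a peg permutation: all its monotone inflations through legal
inflation vectors. -/
def GridOf (πε : PegPerm) : Set (List ℕ) :=
  {γ | ∃ v, LegalVec πε v ∧ γ = inflate πε v}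

/-- Compatibility of decorations in peg monotone inflations: a `+` entry is inflated by
an identity peg permutation (decorations `+`/`•`), a `-` entry by a reverse identity peg
permutation (decorations `-`/`•`), a `•` entry stays `•`. -/
def DecoOK : Deco → Deco → Prop
  | Deco.plus, d => d ≠ Deco.minus
  | Deco.minus, d => d ≠ Deco.plus
  | Deco.dot, d => d = Deco.dot

/-- The peg grid class of a peg permutation: all its peg monotone inflations. -/
def GridPegOf (πε : PegPerm) : Set PegPerm :=
  {γ | ∃ v, LegalVec πε v ∧ ∃ bs : List PegPerm,
    bs.length = πε.length ∧ γ = bs.flatten ∧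
    ∀ i, i < πε.length →
      (bs.getD i []).map Prod.fst = blockVals πε v i ∧
      ∀ p ∈ bs.getD i [], DecoOK (πε.getD i pegDefault).2 p.2}

/-! ## The inflation `π^ε_I` and the permutation `π̃^ε_I` -/

/-- Canonical peg inflation: every inflated entry keeps the decoration of the
original one. -/
def pegInflate (πε : PegPerm) (v : List ℕ) : PegPerm :=
  ((List.range πε.length).map
    (fun i => (blockVals πε v i).map (fun x => (x, (πε.getD i pegDefault).2)))).flatten

/-- The inflation vector associated with the multiset `I = {i, j}` (0-indexed):
entries `i` and `j` are inflated by one more element each. -/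
def inflVec (n i j : ℕ) : List ℕ :=
  (List.range n).map (fun l => 1 + (if l = i then 1 else 0) + (if l = j then 1 else 0))

/-- `π^ε_I` where `I = {i, j}` with `i ≤ j` 0-indexed. -/
def pegI (πε : PegPerm) (i j : ℕ) : PegPerm := pegInflate πε (inflVec πε.length i j)

/-- `π̃^ε_I`: the result of applying to `π^ε_I` the oriented reversal of the segment
of (0-indexed) positions `i+1, …, j+1`. -/
def pegITilde (πε : PegPerm) (i j : ℕ) : PegPerm := pegSegReverse (pegI πε i j) (i + 1) (j + 1)

/-! ## Clean compact peg bases -/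

/-- The clean compact peg basis of a set `B` of peg permutations: the clean compact
peg permutations not in `B` all of whose proper clean compact peg patterns are in `B`. -/
def CCPegBasis (B : Set PegPerm) : Set PegPerm :=
  {πε | IsPegPermList πε ∧ CleanCompact πε ∧ πε ∉ B ∧
    ∀ γ, IsPegPermList γ → CleanCompact γ → IsPegPattern γ πε → γ ≠ πε → γ ∈ B}

/-! ## The exceptional peg permutations for the prefix reversal model -/

/-- `Θ_e(n)` for even `n`:  `n• (n−2)• ⋯ 4• 2• 1⁺ 3• ⋯ (n−3)• (n−1)•`. -/
def ThetaE (n : ℕ) : PegPerm :=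
  ((List.range (n / 2)).map (fun i => (n - 2 * i, Deco.dot))) ++ [(1, Deco.plus)] ++
  ((List.range (n / 2 - 1)).map (fun i => (3 + 2 * i, Deco.dot)))

/-- `Θ_o(n)` for odd `n`:  `n• (n−2)• ⋯ 3• 1⁻ 2• 4• ⋯ (n−3)• (n−1)•`. -/
def ThetaO (n : ℕ) : PegPerm :=
  ((List.range ((n - 1) / 2)).map (fun i => (n - 2 * i, Deco.dot))) ++ [(1, Deco.minus)] ++
  ((List.range ((n - 1) / 2)).map (fun i => (2 + 2 * i, Deco.dot)))

/-- `Λ_e(n)` for even `n` and `t = n/2`:  `(t+1)⁺ t• (t+2)• (t−1)• ⋯ (n−1)• 2• n• 1•`. -/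
def LambdaE (n : ℕ) : PegPerm :=
  (List.range (n / 2)).flatMap
    (fun i => [(n / 2 + 1 + i, if i = 0 then Deco.plus else Deco.dot), (n / 2 - i, Deco.dot)])

/-- `Λ_o(n)` for odd `n` and `t = (n+1)/2`:  `t⁻ (t+1)• (t−1)• (t+2)• ⋯ (n−1)• 2• n• 1•`. -/
def LambdaO (n : ℕ) : PegPerm :=
  ((n + 1) / 2, Deco.minus) ::
    (List.range ((n + 1) / 2 - 1)).flatMap
      (fun i => [((n + 1) / 2 + 1 + i, Deco.dot), ((n + 1) / 2 - 1 - i, Deco.dot)])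
section AuxBasic

lemma flipDeco_flipDeco (d : Deco) : flipDeco (flipDeco d) = d := by cases d <;> rfl

lemma flipDeco_ne_dot {d : Deco} (h : d ≠ Deco.dot) : flipDeco d ≠ Deco.dot := by
  cases d <;> simp_all [flipDeco]

lemma flipDeco_ne_minus {d : Deco} (h : d ≠ Deco.plus) : flipDeco d ≠ Deco.minus := by
  cases d <;> simp_all [flipDeco]

def flipE (p : ℕ × Deco) : ℕ × Deco := (p.1, flipDeco p.2)

@[simp] lemma flipE_fst (p : ℕ × Deco) : (flipE p).1 = p.1 := rfl

lemma pegRevStep_iff {l l' : PegPerm} :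
    PegRevStep l l' ↔ ∃ A M B : PegPerm, M ≠ [] ∧ l = A ++ M ++ B ∧
      l' = A ++ (M.map flipE).reverse ++ B := by
  constructor
  · rintro ⟨i, j, hij, hj, rfl⟩
    refine ⟨l.take i, (l.drop i).take (j + 1 - i), l.drop (j + 1), ?_, ?_, ?_⟩
    · have : ((l.drop i).take (j + 1 - i)).length = min (j + 1 - i) (l.length - i) := by
        simp
      intro hnil
      rw [hnil] at this
      simp at this
      omega
    · have h1 : (l.drop i).drop (j + 1 - i) = l.drop (j + 1) := by
        rw [List.drop_drop]
        congr 1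
        omega
      rw [← h1, List.append_assoc, List.take_append_drop, List.take_append_drop]
    · rfl
  · rintro ⟨A, M, B, hM, rfl, rfl⟩
    have hMlen : 1 ≤ M.length := by
      cases M with
      | nil => simp at hM
      | cons a t => simp
    refine ⟨A.length, A.length + M.length - 1, by omega,
      by simp only [List.length_append]; omega, ?_⟩
    unfold pegSegReverse
    have h1 : (A ++ M ++ B).take A.length = A := by
      rw [List.append_assoc, List.take_left]
    have h2 : (A ++ M ++ B).drop A.length = M ++ B := by
      rw [List.append_assoc, List.drop_left]
    have h3 : A.length + M.length - 1 + 1 = A.length + M.length := by omega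
    have h4 : (A ++ M ++ B).drop (A.length + M.length) = B := by
      rw [List.drop_left']
      simp
    have h5 : A.length + M.length - A.length = M.length := by omega
    rw [h3, h1, h2, h4, h5, List.take_left]
    rfl

lemma pegRevStep_length {l l' : PegPerm} (h : PegRevStep l l') : l'.length = l.length := by
  rw [pegRevStep_iff] at h
  obtain ⟨A, M, B, _, rfl, rfl⟩ := h
  simp

lemma pegRevStep_cons (x : ℕ × Deco) {l l' : PegPerm} (h : PegRevStep l l') :
    PegRevStep (x :: l) (x :: l') := by
  rw [pegRevStep_iff] at h ⊢
  obtain ⟨A, M, B, hM, rfl, rfl⟩ := h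
  exact ⟨x :: A, M, B, hM, by simp, by simp⟩

lemma pegRevStep_mem {l l' : PegPerm} (h : PegRevStep l l') {p : ℕ × Deco} (hp : p ∈ l') :
    ∃ q ∈ l, p = q ∨ p = flipE q := by
  rw [pegRevStep_iff] at h
  obtain ⟨A, M, B, _, rfl, rfl⟩ := h
  simp only [List.mem_append, List.mem_reverse, List.mem_map] at hp
  rcases hp with (hp | ⟨q, hq, rfl⟩) | hp
  · exact ⟨p, by simp [hp], Or.inl rfl⟩
  · exact ⟨q, by simp [hq], Or.inr rfl⟩
  · exact ⟨p, by simp [hp], Or.inl rfl⟩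

lemma reachIn_trans {α : Type*} {st : α → α → Prop} (k k' : ℕ) {a b c : α}
    (h1 : ReachIn st k a b) (h2 : ReachIn st k' b c) : ReachIn st (k + k') a c := by
  induction k generalizing a with
  | zero =>
    have : a = b := h1
    subst this
    simpa using h2
  | succ n ih =>
    obtain ⟨z, hz, hr⟩ := h1
    rw [show n + 1 + k' = (n + k') + 1 by omega]
    exact ⟨z, hz, ih hr⟩

lemma reachIn_cons (x : ℕ × Deco) {k : ℕ} {l m : PegPerm}
    (h : ReachIn PegRevStep k l m) : ReachIn PegRevStep k (x :: l) (x :: m) := by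
  induction k generalizing l with
  | zero =>
    have : l = m := h
    subst this
    rfl
  | succ n ih =>
    obtain ⟨z, hz, hr⟩ := h
    exact ⟨x :: z, pegRevStep_cons x hz, ih hr⟩

lemma reachIn_length {k : ℕ} {l m : PegPerm} (h : ReachIn PegRevStep k l m) :
    m.length = l.length := by
  induction k generalizing l with
  | zero =>
    have : l = m := h
    rw [this]
  | succ n ih =>
    obtain ⟨z, hz, hr⟩ := h
    rw [ih hr, pegRevStep_length hz]

lemma sortable : ∀ (target : List ℕ) (l : PegPerm), (l.map Prod.fst).Perm target →
    ∃ k m, ReachIn PegRevStep k l m ∧ m.map Prod.fst = target := by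
  intro target
  induction target with
  | nil =>
    intro l h
    exact ⟨0, l, rfl, List.perm_nil.mp h⟩
  | cons t ts ih =>
    intro l h
    have ht : t ∈ l.map Prod.fst := h.mem_iff.mpr (List.mem_cons_self (a := t) (l := ts))
    obtain ⟨p, hp, hfst⟩ := List.mem_map.mp ht
    obtain ⟨A, B, rfl⟩ := List.append_of_mem hp
    have hstep : PegRevStep (A ++ p :: B) (flipE p :: ((A.map flipE).reverse ++ B)) := by
      rw [pegRevStep_iff]
      exact ⟨[], A ++ [p], B, by simp, by simp, by simp⟩
    have hperm : (((A.map flipE).reverse ++ B).map Prod.fst).Perm ts := by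
      have h1 : ((A.map flipE).reverse ++ B).map Prod.fst =
          (A.map Prod.fst).reverse ++ B.map Prod.fst := by
        simp [Function.comp]
      have h2 : ((A.map flipE).reverse ++ B).map Prod.fst |>.Perm
          (A.map Prod.fst ++ B.map Prod.fst) := by
        rw [h1]
        exact ((A.map Prod.fst).reverse_perm).append_right _
      have h3 : (t :: (A.map Prod.fst ++ B.map Prod.fst)).Perm (t :: ts) := by
        refine List.Perm.trans ?_ h
        have := List.perm_middle (a := t) (l₁ := A.map Prod.fst) (l₂ := B.map Prod.fst)
        simpa [hfst] using this.symm
      exact h2.trans (List.Perm.cons_inv h3)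
    obtain ⟨k, m, hr, hm⟩ := ih _ hperm
    exact ⟨k + 1, flipE p :: m,
      ⟨_, hstep, reachIn_cons _ hr⟩, by simp [flipE, hfst, hm]⟩

lemma cleanable : ∀ l : PegPerm, ∃ k m, ReachIn PegRevStep k l m ∧
    m.map Prod.fst = l.map Prod.fst ∧ ∀ p ∈ m, p.2 ≠ Deco.minus := by
  intro l
  induction l with
  | nil => exact ⟨0, [], rfl, rfl, by simp⟩
  | cons p l ih =>
    obtain ⟨k, m, hr, hm, hd⟩ := ih
    by_cases hp : p.2 = Deco.minus
    · refine ⟨k + 1, flipE p :: m, ⟨flipE p :: l, ?_, reachIn_cons _ hr⟩,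
        by simp [flipE, hm], ?_⟩
      · rw [pegRevStep_iff]
        exact ⟨[], [p], l, by simp, by simp, by simp⟩
      · intro q hq
        rcases List.mem_cons.mp hq with rfl | hq
        · simp [flipE, hp, flipDeco]
        · exact hd q hq
    · exact ⟨k, p :: m, reachIn_cons _ hr, by simp [hm], by
        intro q hq
        rcases List.mem_cons.mp hq with rfl | hq
        · exact hp
        · exact hd q hq⟩

lemma exists_reach (l : PegPerm) (h : IsPegPermList l) :
    ∃ k m, IsIdPeg m ∧ ReachIn PegRevStep k l m := by
  obtain ⟨k1, m1, hr1, hm1⟩ := sortable (idPerm l.length) l (by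
    have := h
    unfold IsPegPermList IsPermList at this
    simpa using this)
  obtain ⟨k2, m2, hr2, hm2, hd2⟩ := cleanable m1
  refine ⟨k1 + k2, m2, ⟨?_, hd2⟩, reachIn_trans _ _ hr1 hr2⟩
  have hfst : m2.map Prod.fst = idPerm l.length := hm2.trans hm1
  have hlen : m2.length = l.length := by
    have := congrArg List.length hfst
    simpa [idPerm] using this
  rw [hfst, hlen]

lemma pegRd_le_of_reach {l m : PegPerm} {k : ℕ} (h1 : IsIdPeg m)
    (h2 : ReachIn PegRevStep k l m) : pegRd l ≤ k :=
  Nat.sInf_le ⟨m, h1, h2⟩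

lemma pegRd_spec (l : PegPerm) (h : IsPegPermList l) :
    ∃ m, IsIdPeg m ∧ ReachIn PegRevStep (pegRd l) l m := by
  obtain ⟨k, m, h1, h2⟩ := exists_reach l h
  exact Nat.sInf_mem (s := {k | ∃ m, IsIdPeg m ∧ ReachIn PegRevStep k l m}) ⟨k, m, h1, h2⟩

end AuxBasic
section Lift

def liftE (a : ℕ) (x1 x2 : Deco) (p : ℕ × Deco) : PegPerm :=
  if p.1 < a then [p]
  else if p.1 = a then
    (if p.2 = Deco.minus then [(a+1, flipDeco x2), (a, flipDeco x1)] else [(a, x1), (a+1, x2)])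
  else [(p.1 + 1, p.2)]

lemma liftE_ne_nil (a : ℕ) (x1 x2 : Deco) (p : ℕ × Deco) : liftE a x1 x2 p ≠ [] := by
  unfold liftE
  split
  · simp
  · split
    · split <;> simp
    · simp

lemma flatMap_liftE_ne_nil (a : ℕ) (x1 x2 : Deco) {M : PegPerm} (hM : M ≠ []) :
    M.flatMap (liftE a x1 x2) ≠ [] := by
  cases M with
  | nil => simp at hM
  | cons p M' =>
    simp only [List.flatMap_cons, ne_eq, List.append_eq_nil_iff]
    intro h
    exact liftE_ne_nil a x1 x2 p h.1

lemma liftE_flip (a : ℕ) (x1 x2 : Deco) (p : ℕ × Deco) (hp : p.1 = a → p.2 ≠ Deco.dot) :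
    liftE a x1 x2 (flipE p) = ((liftE a x1 x2 p).map flipE).reverse := by
  obtain ⟨v, d⟩ := p
  rcases lt_trichotomy v a with h | rfl | h
  · simp [liftE, flipE, h]
  · have hd : d ≠ Deco.dot := hp rfl
    cases d
    · simp [liftE, flipE, show flipDeco Deco.plus = Deco.minus from rfl]
    · simp [liftE, flipE, show flipDeco Deco.minus = Deco.plus from rfl, flipDeco_flipDeco]
    · exact absurd rfl hd
  · simp [liftE, flipE, show ¬ v < a by omega, show ¬ v = a by omega]

lemma flatMap_rev_flip (a : ℕ) (x1 x2 : Deco) (M : PegPerm)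
    (h : ∀ p ∈ M, p.1 = a → p.2 ≠ Deco.dot) :
    ((M.map flipE).reverse).flatMap (liftE a x1 x2) =
      ((M.flatMap (liftE a x1 x2)).map flipE).reverse := by
  induction M with
  | nil => simp
  | cons p M ih =>
    simp only [List.map_cons, List.reverse_cons, List.flatMap_append, List.flatMap_cons,
      List.flatMap_nil, List.append_nil, List.map_append, List.reverse_append]
    rw [ih (fun q hq hq1 => h q (List.mem_cons_of_mem _ hq) hq1),
      liftE_flip a x1 x2 p (h p List.mem_cons_self)]

lemma pegRevStep_lift (a : ℕ) (x1 x2 : Deco) {l l' : PegPerm}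
    (hinv : ∀ p ∈ l, p.1 = a → p.2 ≠ Deco.dot) (h : PegRevStep l l') :
    PegRevStep (l.flatMap (liftE a x1 x2)) (l'.flatMap (liftE a x1 x2)) := by
  rw [pegRevStep_iff] at h ⊢
  obtain ⟨A, M, B, hM, rfl, rfl⟩ := h
  refine ⟨A.flatMap (liftE a x1 x2), M.flatMap (liftE a x1 x2), B.flatMap (liftE a x1 x2),
    flatMap_liftE_ne_nil a x1 x2 hM, by simp [List.flatMap_append], ?_⟩
  have hMinv : ∀ p ∈ M, p.1 = a → p.2 ≠ Deco.dot := by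
    intro p hp
    exact hinv p (by simp [hp])
  simp only [List.flatMap_append]
  rw [flatMap_rev_flip a x1 x2 M hMinv]

lemma pegRevStep_inv (a : ℕ) {l l' : PegPerm} (h : PegRevStep l l')
    (hinv : ∀ p ∈ l, p.1 = a → p.2 ≠ Deco.dot) :
    ∀ p ∈ l', p.1 = a → p.2 ≠ Deco.dot := by
  intro p hp
  obtain ⟨q, hq, hqe⟩ := pegRevStep_mem h hp
  rcases hqe with rfl | rfl
  · exact hinv _ hq
  · intro h1
    exact flipDeco_ne_dot (hinv q hq h1)

lemma reachIn_lift (a : ℕ) (x1 x2 : Deco) {k : ℕ} {l m : PegPerm}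
    (hinv : ∀ p ∈ l, p.1 = a → p.2 ≠ Deco.dot) (h : ReachIn PegRevStep k l m) :
    ReachIn PegRevStep k (l.flatMap (liftE a x1 x2)) (m.flatMap (liftE a x1 x2)) := by
  induction k generalizing l with
  | zero =>
    have : l = m := h
    subst this
    rfl
  | succ n ih =>
    obtain ⟨z, hz, hr⟩ := h
    exact ⟨z.flatMap (liftE a x1 x2), pegRevStep_lift a x1 x2 hinv hz,
      ih (pegRevStep_inv a hz hinv) hr⟩

end Lift
section Comp

def dnE (a : ℕ) (p : ℕ × Deco) : ℕ × Deco := (if p.1 ≤ a then p.1 else p.1 - 1, p.2)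

lemma flatMap_eq_self {α : Type*} {L : List α} {f : α → List α} (h : ∀ v ∈ L, f v = [v]) :
    L.flatMap f = L := by
  induction L with
  | nil => simp
  | cons x L ih =>
    simp [List.flatMap_cons, h x (by simp), ih (fun v hv => h v (by simp [hv]))]

lemma flatMap_eq_map {α β : Type*} {L : List α} {f : α → List β} {g : α → β}
    (h : ∀ v ∈ L, f v = [g v]) : L.flatMap f = L.map g := by
  induction L with
  | nil => simp
  | cons x L ih =>
    simp [List.flatMap_cons, h x (by simp), ih (fun v hv => h v (by simp [hv]))]

lemma fst_flatMap_liftE (a : ℕ) (x1 x2 : Deco) (m : PegPerm)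
    (h : ∀ p ∈ m, p.2 ≠ Deco.minus) :
    (m.flatMap (liftE a x1 x2)).map Prod.fst =
      (m.map Prod.fst).flatMap
        (fun v => if v < a then [v] else if v = a then [a, a + 1] else [v + 1]) := by
  induction m with
  | nil => simp
  | cons p m ih =>
    simp only [List.flatMap_cons, List.map_cons, List.map_append]
    rw [ih (fun q hq => h q (List.mem_cons_of_mem _ hq))]
    congr 1
    obtain ⟨v, d⟩ := p
    have hd : d ≠ Deco.minus := h (v, d) List.mem_cons_self
    unfold liftE
    by_cases h1 : v < a
    · simp [h1]
    · by_cases h2 : v = a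
      · simp [h1, h2, hd]
      · simp [h1, h2]

lemma range'_flatMap_g (a n : ℕ) (ha1 : 1 ≤ a) (ha2 : a + 1 ≤ n) :
    (List.range' 1 (n - 1)).flatMap
        (fun v => if v < a then [v] else if v = a then [a, a + 1] else [v + 1])
      = List.range' 1 n := by
  have hsplit : List.range' 1 (n - 1) = List.range' 1 (a - 1) ++ List.range' a (n - a) := by
    have h := List.range'_append (s := 1) (m := a - 1) (n := n - a) (step := 1)
    rw [show 1 + 1 * (a - 1) = a by omega, show a - 1 + (n - a) = n - 1 by omega] at h
    exact h.symm
  have hsplit2 : List.range' a (n - a) = a :: List.range' (a + 1) (n - a - 1) := by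
    rw [show n - a = (n - a - 1) + 1 by omega, List.range'_succ]
    simp
  rw [hsplit, hsplit2, List.flatMap_append, List.flatMap_cons]
  have e1 : (List.range' 1 (a - 1)).flatMap
      (fun v => if v < a then [v] else if v = a then [a, a + 1] else [v + 1])
      = List.range' 1 (a - 1) := by
    apply flatMap_eq_self
    intro v hv
    rw [List.mem_range'_1] at hv
    simp [show v < a by omega]
  have e3 : (List.range' (a + 1) (n - a - 1)).flatMap
      (fun v => if v < a then [v] else if v = a then [a, a + 1] else [v + 1])
      = List.range' (a + 2) (n - a - 1) := by
    rw [flatMap_eq_map (g := fun v => v + 1) (by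
      intro v hv
      rw [List.mem_range'_1] at hv
      simp [show ¬ v < a by omega, show v ≠ a by omega])]
    have := List.map_add_range' (a := 1) (a + 1) (n - a - 1) 1
    rw [show (fun v => v + 1) = (fun v => 1 + v) by funext v; omega, this]
    congr 1
    omega
  rw [e1, e3, if_neg (by omega), if_pos rfl]
  have key : (a : ℕ) :: (a + 1) :: List.range' (a + 2) (n - a - 1)
      = List.range' a (n - a - 1 + 2) := by
    rw [show n - a - 1 + 2 = (n - a - 1 + 1) + 1 by omega, List.range'_succ,
      List.range'_succ]
  have h2 := List.range'_append (s := 1) (m := a - 1) (n := n - a - 1 + 2) (step := 1)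
  rw [show 1 + 1 * (a - 1) = a by omega, show a - 1 + (n - a - 1 + 2) = n by omega] at h2
  rw [show ([a, a+1] : List ℕ) ++ List.range' (a + 2) (n - a - 1)
    = a :: (a+1) :: List.range' (a + 2) (n - a - 1) by simp, key, h2]

lemma deco_flatMap_liftE (a : ℕ) (x1 x2 : Deco) (hx1 : x1 ≠ Deco.minus)
    (hx2 : x2 ≠ Deco.minus) (m : PegPerm) (h : ∀ p ∈ m, p.2 ≠ Deco.minus) :
    ∀ p ∈ m.flatMap (liftE a x1 x2), p.2 ≠ Deco.minus := by
  intro p hp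
  rw [List.mem_flatMap] at hp
  obtain ⟨q, hq, hpq⟩ := hp
  have hqd := h q hq
  obtain ⟨v, d⟩ := q
  by_cases h1 : v < a
  · simp [liftE, h1] at hpq
    subst hpq
    exact hqd
  · by_cases h2 : v = a
    · have hdm : d ≠ Deco.minus := hqd
      simp [liftE, h1, h2, hdm] at hpq
      rcases hpq with rfl | rfl
      · exact hx1
      · exact hx2
    · simp [liftE, h1, h2] at hpq
      subst hpq
      exact hqd

lemma isIdPeg_flatMap (a : ℕ) (x1 x2 : Deco) (hx1 : x1 ≠ Deco.minus) (hx2 : x2 ≠ Deco.minus)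
    (m : PegPerm) (hm : IsIdPeg m) (ha1 : 1 ≤ a) (ha2 : a + 1 ≤ m.length + 1) :
    IsIdPeg (m.flatMap (liftE a x1 x2)) := by
  obtain ⟨hfst, hdec⟩ := hm
  have key : (m.flatMap (liftE a x1 x2)).map Prod.fst = List.range' 1 (m.length + 1) := by
    rw [fst_flatMap_liftE a x1 x2 m hdec, hfst]
    have := range'_flatMap_g a (m.length + 1) ha1 ha2
    rw [show m.length + 1 - 1 = m.length by omega] at this
    unfold idPerm
    exact this
  have hlen : (m.flatMap (liftE a x1 x2)).length = m.length + 1 := by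
    have := congrArg List.length key
    simpa using this
  exact ⟨by rw [key, hlen]; rfl, deco_flatMap_liftE a x1 x2 hx1 hx2 m hdec⟩

end Comp
section MainAux

lemma liftE_dnE (a : ℕ) (x1 x2 : Deco) (q : ℕ × Deco) (h1 : q.1 ≠ a) (h2 : q.1 ≠ a + 1) :
    liftE a x1 x2 (dnE a q) = [q] := by
  obtain ⟨v, d⟩ := q
  simp only at h1 h2
  by_cases hv : v ≤ a
  · simp [dnE, liftE, hv, show v < a by omega]
  · simp [dnE, liftE, hv, show ¬ v - 1 < a by omega, show ¬ v - 1 = a by omega,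
      show v - 1 + 1 = v by omega]

lemma map_sub_one_range' (s t : ℕ) :
    (List.range' (s + 1) t).map (fun v => v - 1) = List.range' s t := by
  have h := List.map_add_range' (a := 1) s t 1
  rw [show s + 1 = 1 + s by omega, ← h, List.map_map]
  have he : ∀ x ∈ List.range' s t, ((fun v => v - 1) ∘ fun x => 1 + x) x = x := by
    intro x _
    simp only [Function.comp_apply]
    omega
  rw [List.map_congr_left he]
  exact List.map_id' _

lemma nodup_middle_not_mem {x : ℕ} {A' M B' : List ℕ} (h : (A' ++ M ++ B').Nodup)
    (hx : x ∈ M) : x ∉ A' ∧ x ∉ B' := by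
  rw [List.append_assoc, List.nodup_append] at h
  obtain ⟨hA, hMB, hdisj⟩ := h
  rw [List.nodup_append] at hMB
  obtain ⟨hM, hB, hdisj2⟩ := hMB
  exact ⟨fun hxa => hdisj x hxa x (List.mem_append_left _ hx) rfl, fun hxb => hdisj2 x hx x hxb rfl⟩

lemma dn_lt_iff {a v w u1 : ℕ} (hu : u1 = a ∨ u1 = a + 1)
    (hv : v = u1 ∨ (v ≠ a ∧ v ≠ a + 1)) (hw : w = u1 ∨ (w ≠ a ∧ w ≠ a + 1)) :
    (v < w ↔ (if v ≤ a then v else v - 1) < (if w ≤ a then w else w - 1)) := by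
  rcases hu with rfl | rfl <;> rcases hv with rfl | ⟨hv1, hv2⟩ <;>
    rcases hw with hw | ⟨hw1, hw2⟩ <;> split <;> split <;> omega

lemma getD_append_lt (X Y : PegPerm) (i : ℕ) (h : i < X.length) :
    (X ++ Y).getD i pegDefault = X.getD i pegDefault := by
  rw [List.getD_eq_getElem _ _ (show i < (X ++ Y).length by
      simp only [List.length_append]; omega),
    List.getD_eq_getElem _ _ h, List.getElem_append_left h]

lemma getD_append_eq (X Y : PegPerm) (p : ℕ × Deco) :
    (X ++ p :: Y).getD X.length pegDefault = p := by
  rw [List.getD_eq_getElem _ _ (show X.length < (X ++ p :: Y).length by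
      simp only [List.length_append, List.length_cons]; omega),
    List.getElem_append_right (le_refl X.length)]
  simp

lemma getD_append_gt (X Y : PegPerm) (p : ℕ × Deco) (i j : ℕ) (h : i = X.length + 1 + j) :
    (X ++ p :: Y).getD i pegDefault = Y.getD j pegDefault := by
  subst h
  by_cases hj : j < Y.length
  · rw [List.getD_eq_getElem _ _ (show X.length + 1 + j < (X ++ p :: Y).length by
        simp only [List.length_append, List.length_cons]; omega),
      List.getElem_append_right (by omega), ← List.getD_eq_getElem,
      show X.length + 1 + j - X.length = j + 1 by omega, List.getD_cons_succ]
  · rw [List.getD_eq_default _ _ (by simp only [List.length_append, List.length_cons]; omega),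
      List.getD_eq_default _ _ (by omega)]

lemma main_aux (k : ℕ) (πε : PegPerm) (h0 : IsPegPermList πε) (h1 : πε ∉ PegBrd k)
    (h2 : ∀ γ, IsPegPermList γ → IsPegPattern γ πε → γ ≠ πε → γ ∈ PegBrd k)
    (A B : PegPerm) (a u1 u2 : ℕ) (d1 d2 x1 x2 mdeco : Deco)
    (hπ : πε = A ++ [(u1, d1), (u2, d2)] ++ B)
    (hblk : liftE a x1 x2 (a, mdeco) = [(u1, d1), (u2, d2)])
    (hu : (u1 = a ∧ u2 = a + 1) ∨ (u1 = a + 1 ∧ u2 = a))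
    (hx1 : x1 ≠ Deco.minus) (hx2 : x2 ≠ Deco.minus) (hmd : mdeco ≠ Deco.dot)
    (hd1p : d1 = Deco.plus → mdeco = Deco.plus)
    (hd1m : d1 = Deco.minus → mdeco = Deco.minus) : False := by
  classical
  have hlenπ : πε.length = A.length + B.length + 2 := by
    rw [hπ]
    simp only [List.length_append, List.length_cons, List.length_nil]
    omega
  set n := πε.length with hn
  have hperm : (πε.map Prod.fst).Perm (List.range' 1 n) := by
    have h := h0
    unfold IsPegPermList IsPermList idPerm at h
    simpa using h
  have hnodup : (πε.map Prod.fst).Nodup :=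
    hperm.symm.nodup (List.nodup_range' (s := 1) (n := n))
  have hfst : πε.map Prod.fst = A.map Prod.fst ++ [u1, u2] ++ B.map Prod.fst := by
    rw [hπ]
    simp
  have hAB : ∀ p ∈ A ++ B, p.1 ≠ a ∧ p.1 ≠ a + 1 := by
    intro p hp
    have hmem : p.1 ∈ A.map Prod.fst ∨ p.1 ∈ B.map Prod.fst := by
      rcases List.mem_append.mp hp with h | h
      · exact Or.inl (List.mem_map_of_mem h)
      · exact Or.inr (List.mem_map_of_mem h)
    have h := hnodup
    rw [hfst] at h
    have h1m : u1 ∉ A.map Prod.fst ∧ u1 ∉ B.map Prod.fst :=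
      nodup_middle_not_mem h (by simp)
    have h2m : u2 ∉ A.map Prod.fst ∧ u2 ∉ B.map Prod.fst :=
      nodup_middle_not_mem h (by simp)
    constructor
    · intro he
      rcases hu with ⟨hu1, hu2⟩ | ⟨hu1, hu2⟩
      · have hpe : p.1 = u1 := by omega
        rcases hmem with h' | h'
        · exact h1m.1 (by rwa [hpe] at h')
        · exact h1m.2 (by rwa [hpe] at h')
      · have hpe : p.1 = u2 := by omega
        rcases hmem with h' | h'
        · exact h2m.1 (by rwa [hpe] at h')
        · exact h2m.2 (by rwa [hpe] at h')
    · intro he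
      rcases hu with ⟨hu1, hu2⟩ | ⟨hu1, hu2⟩
      · have hpe : p.1 = u2 := by omega
        rcases hmem with h' | h'
        · exact h2m.1 (by rwa [hpe] at h')
        · exact h2m.2 (by rwa [hpe] at h')
      · have hpe : p.1 = u1 := by omega
        rcases hmem with h' | h'
        · exact h1m.1 (by rwa [hpe] at h')
        · exact h1m.2 (by rwa [hpe] at h')
  have ha1 : 1 ≤ a := by
    have hm : a ∈ πε.map Prod.fst := by
      rw [hfst]
      rcases hu with ⟨hu1, _⟩ | ⟨_, hu2⟩
      · simp [← hu1]
      · simp [← hu2]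
    have := hperm.mem_iff.mp hm
    rw [List.mem_range'_1] at this
    omega
  have ha2 : a + 1 ≤ n := by
    have hm : a + 1 ∈ πε.map Prod.fst := by
      rw [hfst]
      rcases hu with ⟨_, hu2⟩ | ⟨hu1, _⟩
      · simp [← hu2]
      · simp [← hu1]
    have := hperm.mem_iff.mp hm
    rw [List.mem_range'_1] at this
    omega
  set γ : PegPerm := A.map (dnE a) ++ [(a, mdeco)] ++ B.map (dnE a) with hγ
  set s : PegPerm := A ++ [(u1, d1)] ++ B with hs
  have hslen : s.length = A.length + B.length + 1 := by
    rw [hs]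
    simp only [List.length_append, List.length_cons, List.length_nil]
    omega
  have hγlen : γ.length = A.length + B.length + 1 := by
    rw [hγ]
    simp only [List.length_append, List.length_cons, List.length_nil, List.length_map]
    omega
  have hdnu1 : (if u1 ≤ a then u1 else u1 - 1) = a := by
    rcases hu with ⟨hu1, _⟩ | ⟨hu1, _⟩ <;> subst hu1 <;> simp
  have hsfst : s.map Prod.fst = A.map Prod.fst ++ [u1] ++ B.map Prod.fst := by
    rw [hs]
    simp
  have hγfst : γ.map Prod.fst
      = (s.map Prod.fst).map (fun v => if v ≤ a then v else v - 1) := by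
    rw [hγ, hsfst]
    simp only [List.map_append, List.map_map, List.map_cons, List.map_nil, hdnu1]
    rfl
  have hπperm2 : (πε.map Prod.fst).Perm (u1 :: u2 :: (A.map Prod.fst ++ B.map Prod.fst)) := by
    rw [hfst, List.append_assoc]
    exact List.perm_middle.trans ((List.perm_middle).cons u1)
  have hkey : (a :: (A.map Prod.fst ++ B.map Prod.fst)).Perm
      (List.range' 1 a ++ List.range' (a + 2) (n - a - 1)) := by
    have hr : (List.range' 1 n).Perm (a :: (a + 1) :: (A.map Prod.fst ++ B.map Prod.fst)) := by
      refine (hperm.symm.trans hπperm2).trans ?_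
      rcases hu with ⟨hu1, hu2⟩ | ⟨hu1, hu2⟩
      · rw [hu1, hu2]
      · rw [hu1, hu2]
        exact List.Perm.swap _ _ _
    have hsplit : List.range' 1 n
        = List.range' 1 a ++ (a + 1) :: List.range' (a + 2) (n - a - 1) := by
      have h := List.range'_append (s := 1) (m := a) (n := n - a) (step := 1)
      rw [show 1 + 1 * a = a + 1 by omega, show a + (n - a) = n by omega] at h
      rw [← h, show n - a = (n - a - 1) + 1 by omega, List.range'_succ]
      simp
    apply List.Perm.cons_inv (a := a + 1)
    have h4 : (List.range' 1 n).Perm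
        ((a + 1) :: (List.range' 1 a ++ List.range' (a + 2) (n - a - 1))) := by
      rw [hsplit]
      exact List.perm_middle
    exact (List.Perm.swap _ _ _).trans (hr.symm.trans h4)
  have hmapdn : ((a :: (A.map Prod.fst ++ B.map Prod.fst)).map
        (fun v => if v ≤ a then v else v - 1)).Perm (List.range' 1 (n - 1)) := by
    refine (hkey.map _).trans ?_
    have e1 : (List.range' 1 a).map (fun v => if v ≤ a then v else v - 1)
        = List.range' 1 a := by
      have he : ∀ v ∈ List.range' 1 a, (if v ≤ a then v else v - 1) = id v := by
        intro v hv
        rw [List.mem_range'_1] at hv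
        simp only [id_eq]
        rw [if_pos (by omega)]
      rw [List.map_congr_left he, List.map_id]
    have e2 : (List.range' (a + 2) (n - a - 1)).map (fun v => if v ≤ a then v else v - 1)
        = List.range' (a + 1) (n - a - 1) := by
      have he : ∀ v ∈ List.range' (a + 2) (n - a - 1),
          (if v ≤ a then v else v - 1) = (fun v => v - 1) v := by
        intro v hv
        rw [List.mem_range'_1] at hv
        rw [if_neg (by omega)]
      rw [List.map_congr_left he]
      exact map_sub_one_range' (a + 1) (n - a - 1)
    rw [List.map_append, e1, e2]
    have h := List.range'_append (s := 1) (m := a) (n := n - a - 1) (step := 1)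
    rw [show 1 + 1 * a = a + 1 by omega, show a + (n - a - 1) = n - 1 by omega] at h
    rw [h]
  have hsp : (s.map Prod.fst).Perm (u1 :: (A.map Prod.fst ++ B.map Prod.fst)) := by
    rw [hsfst, List.append_assoc]
    exact List.perm_middle
  have hγpermfst : (γ.map Prod.fst).Perm (List.range' 1 (n - 1)) := by
    rw [hγfst]
    refine ((List.Perm.map _ hsp).trans ?_).trans hmapdn
    have heq : ((u1 :: (A.map Prod.fst ++ B.map Prod.fst)).map
          (fun v => if v ≤ a then v else v - 1))
        = ((a :: (A.map Prod.fst ++ B.map Prod.fst)).map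
          (fun v => if v ≤ a then v else v - 1)) := by
      simp only [List.map_cons, hdnu1, if_pos (le_refl a)]
    rw [heq]
  have hγperm : IsPegPermList γ := by
    unfold IsPegPermList IsPermList idPerm
    have hl : (γ.map Prod.fst).length = n - 1 := by
      simp only [List.length_map]
      omega
    rw [hl]
    exact hγpermfst
  have hmemfact : ∀ v ∈ s.map Prod.fst, v = u1 ∨ (v ≠ a ∧ v ≠ a + 1) := by
    intro v hv
    rw [hsfst] at hv
    rcases List.mem_append.mp hv with hv | hv
    · rcases List.mem_append.mp hv with hv | hv
      · obtain ⟨p, hp, rfl⟩ := List.mem_map.mp hv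
        exact Or.inr (hAB p (List.mem_append_left _ hp))
      · simp at hv
        exact Or.inl hv
    · obtain ⟨p, hp, rfl⟩ := List.mem_map.mp hv
      exact Or.inr (hAB p (List.mem_append_right _ hp))
  have hs2 : s = A ++ ((u1, d1) :: B) := by
    rw [hs, List.append_assoc]
    rfl
  have hγ2 : γ = A.map (dnE a) ++ ((a, mdeco) :: B.map (dnE a)) := by
    rw [hγ, List.append_assoc]
    rfl
  have hpat : IsPegPattern γ πε := by
    refine ⟨s, ?_, ⟨by rw [hγfst]; simp, ?_⟩, ?_⟩
    · rw [hs, hπ, List.append_assoc, List.append_assoc]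
      exact List.Sublist.append (List.Sublist.refl A)
        (List.Sublist.cons₂ _ (List.sublist_cons_self _ _))
    · intro i j hi hj
      rw [hγfst]
      have egi : ((s.map Prod.fst).map (fun v => if v ≤ a then v else v - 1)).getD i 0
          = (fun v => if v ≤ a then v else v - 1) ((s.map Prod.fst).getD i 0) := by
        rw [List.getD_eq_getElem _ _ (show i < ((s.map Prod.fst).map
            (fun v => if v ≤ a then v else v - 1)).length by simpa using hi),
          List.getElem_map, List.getD_eq_getElem _ _ hi]
      have egj : ((s.map Prod.fst).map (fun v => if v ≤ a then v else v - 1)).getD j 0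
          = (fun v => if v ≤ a then v else v - 1) ((s.map Prod.fst).getD j 0) := by
        rw [List.getD_eq_getElem _ _ (show j < ((s.map Prod.fst).map
            (fun v => if v ≤ a then v else v - 1)).length by simpa using hj),
          List.getElem_map, List.getD_eq_getElem _ _ hj]
      rw [egi, egj]
      have hmi : (s.map Prod.fst).getD i 0 ∈ s.map Prod.fst := by
        rw [List.getD_eq_getElem _ _ hi]
        exact List.getElem_mem _
      have hmj : (s.map Prod.fst).getD j 0 ∈ s.map Prod.fst := by
        rw [List.getD_eq_getElem _ _ hj]
        exact List.getElem_mem _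
      refine dn_lt_iff ?_ (hmemfact _ hmi) (hmemfact _ hmj)
      rcases hu with ⟨h, _⟩ | ⟨h, _⟩
      · exact Or.inl h
      · exact Or.inr h
    · intro i hi0
      by_cases hiA : i < A.length
      · rw [hs2, hγ2, getD_append_lt _ _ _ hiA,
          getD_append_lt _ _ _ (show i < (A.map (dnE a)).length by simpa using hiA),
          List.getD_eq_getElem _ _ (show i < (A.map (dnE a)).length by simpa using hiA),
          List.getElem_map, List.getD_eq_getElem _ _ hiA]
        exact ⟨fun h => h, fun h => h⟩
      · by_cases hiE : i = A.length
        · subst hiE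
          rw [hs2, hγ2, getD_append_eq]
          have e : (A.map (dnE a) ++ ((a, mdeco) :: B.map (dnE a))).getD A.length pegDefault
              = (a, mdeco) := by
            have hl : (A.map (dnE a)).length = A.length := by simp
            rw [← hl, getD_append_eq]
          rw [e]
          exact ⟨hd1p, hd1m⟩
        · have hgt : A.length < i := by omega
          rw [hs2, hγ2,
            getD_append_gt _ _ _ i (i - A.length - 1) (by omega),
            getD_append_gt _ _ _ i (i - A.length - 1)
              (by simp only [List.length_map]; omega)]
          by_cases hib : i - A.length - 1 < B.length
          · rw [List.getD_eq_getElem _ _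
                (show i - A.length - 1 < (B.map (dnE a)).length by simpa using hib),
              List.getElem_map, List.getD_eq_getElem _ _ hib]
            exact ⟨fun h => h, fun h => h⟩
          · rw [List.getD_eq_default _ _ (by omega),
              List.getD_eq_default _ _ (by simp only [List.length_map]; omega)]
            simp [pegDefault]
  have hne : γ ≠ πε := by
    intro he
    have hle := congrArg List.length he
    rw [hγlen] at hle
    omega
  have hball := h2 γ hγperm hpat hne
  have hrdγ : pegRd γ ≤ k := hball.2
  obtain ⟨m, hmId, hreach⟩ := pegRd_spec γ hγperm
  have hinvγ : ∀ p ∈ γ, p.1 = a → p.2 ≠ Deco.dot := by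
    intro p hp
    rw [hγ] at hp
    rcases List.mem_append.mp hp with hp | hp
    · rcases List.mem_append.mp hp with hp | hp
      · obtain ⟨q, hq, rfl⟩ := List.mem_map.mp hp
        intro hfa
        exfalso
        have hq2 := hAB q (List.mem_append_left _ hq)
        simp only [dnE] at hfa
        rcases le_or_gt q.1 a with h | h
        · rw [if_pos h] at hfa
          exact hq2.1 hfa
        · rw [if_neg (by omega)] at hfa
          omega
      · simp only [List.mem_singleton] at hp
        subst hp
        intro _
        exact hmd
    · obtain ⟨q, hq, rfl⟩ := List.mem_map.mp hp
      intro hfa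
      exfalso
      have hq2 := hAB q (List.mem_append_right _ hq)
      simp only [dnE] at hfa
      rcases le_or_gt q.1 a with h | h
      · rw [if_pos h] at hfa
        exact hq2.1 hfa
      · rw [if_neg (by omega)] at hfa
        omega
  have hflat : γ.flatMap (liftE a x1 x2) = πε := by
    have eA : A.flatMap (fun q => liftE a x1 x2 (dnE a q)) = A :=
      flatMap_eq_self (fun q hq => liftE_dnE a x1 x2 q
        (hAB q (List.mem_append_left _ hq)).1 (hAB q (List.mem_append_left _ hq)).2)
    have eB : B.flatMap (fun q => liftE a x1 x2 (dnE a q)) = B :=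
      flatMap_eq_self (fun q hq => liftE_dnE a x1 x2 q
        (hAB q (List.mem_append_right _ hq)).1 (hAB q (List.mem_append_right _ hq)).2)
    rw [hγ, hπ, List.flatMap_append, List.flatMap_append, List.flatMap_map, List.flatMap_map,
      eA, eB]
    simp [List.flatMap_cons, hblk]
  have hmlen : m.length = γ.length := reachIn_length hreach
  have hlift := reachIn_lift a x1 x2 hinvγ hreach
  have hId2 : IsIdPeg (m.flatMap (liftE a x1 x2)) :=
    isIdPeg_flatMap a x1 x2 hx1 hx2 m hmId ha1 (by omega)
  have hfinal : pegRd πε ≤ pegRd γ := by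
    refine pegRd_le_of_reach hId2 ?_
    rw [← hflat]
    exact hlift
  exact h1 ⟨h0, le_trans hfinal hrdγ⟩

end MainAux

/-- every peg basis permutation of `B̂_k^{rd}` is compact. -/
theorem peg_basis_compact (k : ℕ) (πε : PegPerm) (h0 : IsPegPermList πε)
    (h1 : πε ∉ PegBrd k)
    (h2 : ∀ γ, IsPegPermList γ → IsPegPattern γ πε → γ ≠ πε → γ ∈ PegBrd k) :
    CompactPeg πε := by
  intro i hi hstrip
  exfalso
  have hi1 : i < πε.length := by omega
  set p := πε.getD i pegDefault with hp
  set q := πε.getD (i + 1) pegDefault with hq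
  have hdec : πε = πε.take i ++ [p, q] ++ πε.drop (i + 2) := by
    rw [hp, hq, List.getD_eq_getElem _ _ hi1, List.getD_eq_getElem _ _ hi]
    conv_lhs => rw [← List.take_append_drop i πε]
    rw [List.drop_eq_getElem_cons hi1, List.drop_eq_getElem_cons hi]
    simp
  rcases hstrip with ⟨hq1, hpd, hqd⟩ | ⟨hp1, hpd, hqd⟩
  · refine main_aux k πε h0 h1 h2 (πε.take i) (πε.drop (i + 2)) p.1 p.1 (p.1 + 1) p.2 q.2
      p.2 q.2 Deco.plus ?_ ?_ (Or.inl ⟨rfl, rfl⟩) hpd hqd (by simp)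
      (fun _ => rfl) (fun h => absurd h hpd)
    · refine hdec.trans ?_
      rw [show ((p.1 + 1 : ℕ), q.2) = q from by rw [← hq1]]
    · simp [liftE]
  · refine main_aux k πε h0 h1 h2 (πε.take i) (πε.drop (i + 2)) q.1 (q.1 + 1) q.1 p.2 q.2
      (flipDeco q.2) (flipDeco p.2) Deco.minus ?_ ?_ (Or.inr ⟨rfl, rfl⟩)
      (flipDeco_ne_minus hqd) (flipDeco_ne_minus hpd) (by simp)
      (fun h => absurd h hpd) (fun _ => rfl)
    · refine hdec.trans ?_
      rw [show ((q.1 + 1 : ℕ), p.2) = p from by rw [← hp1]]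
    · simp [liftE, flipDeco_flipDeco]
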